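/- A minimum-size unsatisfiable (3,2,2)-formula has no variable of degree 3 and has an even number of clauses. -/
import Mathlib


abbrev Lit := ℕ × Bool

def Lit.neg (l : Lit) : Lit := (l.1, !l.2)

abbrev Clause := Finset Lit

def Clause.nontaut (C : Clause) : Prop := ∀ l ∈ C, Lit.neg l ∉ C

instance (C : Clause) : Decidable (Clause.nontaut C) := by
  unfold Clause.nontaut; infer_instance

abbrev CNF := Finset Clause

def satClause (τ : ℕ → Bool) (C : Clause) : Prop := ∃ l ∈ C, τ l.1 = l.2

def satCNF (τ : ℕ → Bool) (F : CNF) : Prop := ∀ C ∈ F, satClause τ C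

def Satisfiable (F : CNF) : Prop := ∃ τ, satCNF τ F

def occ (F : CNF) (v : ℕ) : CNF := F.filter (fun C => (v, true) ∈ C ∨ (v, false) ∈ C)

def vdeg (F : CNF) (v : ℕ) : ℕ := (occ F v).card

def ldeg (F : CNF) (l : Lit) : ℕ := (F.filter (fun C => l ∈ C)).card

def vars (F : CNF) : Finset ℕ := F.sup (fun C => C.image Prod.fst)

def isKCNF (k : ℕ) (F : CNF) : Prop := ∀ C ∈ F, Clause.nontaut C ∧ C.card = k

def KS (k s : ℕ) (F : CNF) : Prop := isKCNF k F ∧ ∀ v, vdeg F v ≤ s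

def KPQ (k p q : ℕ) (F : CNF) : Prop :=
  isKCNF k F ∧ ∀ v, ldeg F (v, true) ≤ p ∧ ldeg F (v, false) ≤ q

def MinUnsat (F : CNF) : Prop := ¬ Satisfiable F ∧ ∀ C ∈ F, Satisfiable (F.erase C)

-- helpers
lemma Lit.neg_ne (l : Lit) : Lit.neg l ≠ l := by
  obtain ⟨n, b⟩ := l; simp [Lit.neg]

lemma Lit.neg_neg (l : Lit) : Lit.neg (Lit.neg l) = l := by
  obtain ⟨n, b⟩ := l; simp [Lit.neg]

lemma sat_neg_iff (σ : ℕ → Bool) (l : Lit) :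
    σ (Lit.neg l).1 = (Lit.neg l).2 ↔ ¬ (σ l.1 = l.2) := by
  obtain ⟨n, b⟩ := l
  cases b <;> simp [Lit.neg]

lemma ldeg_le2 {F : CNF} (hF : KPQ 3 2 2 F) (l : Lit) : ldeg F l ≤ 2 := by
  obtain ⟨n, b⟩ := l
  cases b
  · exact (hF.2 n).2
  · exact (hF.2 n).1

lemma KPQ_mono {F G : CNF} (h : KPQ 3 2 2 F) (hsub : G ⊆ F) : KPQ 3 2 2 G := by
  constructor
  · intro C hC; exact h.1 C (hsub hC)
  · intro v
    refine ⟨le_trans ?_ (h.2 v).1, le_trans ?_ (h.2 v).2⟩ <;>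
      exact Finset.card_le_card (Finset.filter_subset_filter _ hsub)

lemma sat_update {σ : ℕ → Bool} {C : Clause} {v : ℕ}
    (h1 : (v, true) ∉ C) (h2 : (v, false) ∉ C) (h : satClause σ C) (t : Bool) :
    satClause (Function.update σ v t) C := by
  obtain ⟨l, hl, hσ⟩ := h
  refine ⟨l, hl, ?_⟩
  have hne : l.1 ≠ v := by
    intro hv
    cases hb : l.2
    · exact h2 (by rw [← hv, ← hb]; exact hl)
    · exact h1 (by rw [← hv, ← hb]; exact hl)
  rw [Function.update_of_ne hne]
  exact hσ

-- a literal of a clause in F has its variable in vars F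
lemma var_mem_vars {F : CNF} {C : Clause} {l : Lit} (hC : C ∈ F) (hl : l ∈ C) :
    l.1 ∈ vars F := by
  have h1 : C.image Prod.fst ≤ vars F := Finset.le_sup hC
  exact h1 (Finset.mem_image_of_mem _ hl)

lemma ldeg_fresh {F : CNF} {l : Lit} (h : l.1 ∉ vars F) : ldeg F l = 0 := by
  rw [ldeg, Finset.card_eq_zero, Finset.filter_eq_empty_iff]
  intro C hC hl
  exact h (var_mem_vars hC hl)

lemma mk3 {p q r : Lit} (hpq : p ≠ q) (hpr : p ≠ r) (hqr : q ≠ r)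
    (h1 : Lit.neg p ≠ q) (h2 : Lit.neg p ≠ r) (h3 : Lit.neg q ≠ r) :
    Clause.nontaut {p, q, r} ∧ ({p, q, r} : Clause).card = 3 := by
  have negsym : ∀ x y : Lit, Lit.neg x ≠ y → Lit.neg y ≠ x := by
    intro x y h hxy
    exact h (by rw [← hxy, Lit.neg_neg])
  constructor
  · intro l hl
    simp only [Finset.mem_insert, Finset.mem_singleton] at hl ⊢
    rcases hl with rfl | rfl | rfl
    · push_neg
      exact ⟨Lit.neg_ne _, h1, h2⟩
    · push_neg
      exact ⟨negsym _ _ h1, Lit.neg_ne _, h3⟩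
    · push_neg
      exact ⟨negsym _ _ h2, negsym _ _ h3, Lit.neg_ne _⟩
  · rw [Finset.card_insert_of_notMem (by simp [hpq, hpr]),
        Finset.card_insert_of_notMem (by simp [hqr]), Finset.card_singleton]

-- charge lemmas: bounding occurrences in F \ {C1,C2,C3}
lemma base_bound2 {F : CNF} (D : CNF) {l : Lit} (h2 : ldeg F l ≤ 2) :
    ((F \ D).filter (fun S => l ∈ S)).card ≤ 2 := by
  refine le_trans (Finset.card_le_card ?_) h2
  exact Finset.filter_subset_filter _ (Finset.sdiff_subset)

lemma base_bound1 {F D : CNF} {l : Lit} {Ci : Clause} (h2 : ldeg F l ≤ 2)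
    (hCiF : Ci ∈ F) (hCiD : Ci ∈ D) (hli : l ∈ Ci) :
    ((F \ D).filter (fun S => l ∈ S)).card ≤ 1 := by
  have hsub : (F \ D).filter (fun S => l ∈ S) ⊆ (F.filter (fun S => l ∈ S)).erase Ci := by
    intro S hS
    simp only [Finset.mem_filter, Finset.mem_sdiff] at hS
    refine Finset.mem_erase.2 ⟨?_, Finset.mem_filter.2 ⟨hS.1.1, hS.2⟩⟩
    rintro rfl; exact hS.1.2 hCiD
  refine le_trans (Finset.card_le_card hsub) ?_
  rw [Finset.card_erase_of_mem (Finset.mem_filter.2 ⟨hCiF, hli⟩)]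
  simp only [ldeg] at h2
  omega

lemma base_bound0 {F D : CNF} {l : Lit} {Ci Cj : Clause} (h2 : ldeg F l ≤ 2)
    (hCiF : Ci ∈ F) (hCiD : Ci ∈ D) (hli : l ∈ Ci)
    (hCjF : Cj ∈ F) (hCjD : Cj ∈ D) (hlj : l ∈ Cj) (hij : Ci ≠ Cj) :
    ((F \ D).filter (fun S => l ∈ S)).card = 0 := by
  have hsub : (F \ D).filter (fun S => l ∈ S) ⊆
      ((F.filter (fun S => l ∈ S)).erase Ci).erase Cj := by
    intro S hS
    simp only [Finset.mem_filter, Finset.mem_sdiff] at hS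
    refine Finset.mem_erase.2 ⟨?_, Finset.mem_erase.2 ⟨?_, Finset.mem_filter.2 ⟨hS.1.1, hS.2⟩⟩⟩
    · rintro rfl; exact hS.1.2 hCjD
    · rintro rfl; exact hS.1.2 hCiD
  have hle := Finset.card_le_card hsub
  rw [Finset.card_erase_of_mem, Finset.card_erase_of_mem] at hle
  · simp only [ldeg] at h2
    omega
  · exact Finset.mem_filter.2 ⟨hCiF, hli⟩
  · exact Finset.mem_erase.2 ⟨Ne.symm hij, Finset.mem_filter.2 ⟨hCjF, hlj⟩⟩

lemma workhorse (F : CNF) (hF : KPQ 3 2 2 F) (hunsat : ¬ Satisfiable F)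
    (hmin : ∀ G : CNF, KPQ 3 2 2 G → ¬ Satisfiable G → F.card ≤ G.card)
    (v : ℕ) (bb : Bool) (C1 C2 C3 : Clause)
    (h1F : C1 ∈ F) (h2F : C2 ∈ F) (h3F : C3 ∈ F)
    (h12 : C1 ≠ C2) (h13 : C1 ≠ C3) (h23 : C2 ≠ C3)
    (hocc : occ F v = {C1, C2, C3})
    (a1 a2 c1 c2 e1 e2 : Lit)
    (hxC1 : (v, bb) ∈ C1) (hxC2 : (v, bb) ∈ C2) (hyC3 : (v, !bb) ∈ C3)
    (ha1 : a1 ∈ C1) (ha2 : a2 ∈ C1) (hc1 : c1 ∈ C2) (hc2 : c2 ∈ C2)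
    (he1 : e1 ∈ C3) (he2 : e2 ∈ C3)
    (hva1 : a1.1 ≠ v) (hva2 : a2.1 ≠ v) (hvc1 : c1.1 ≠ v) (hvc2 : c2.1 ≠ v)
    (hve1 : e1.1 ≠ v) (hve2 : e2.1 ≠ v)
    (N : Finset Clause)
    (hNk : ∀ S ∈ N, Clause.nontaut S ∧ S.card = 3)
    (hNc : N.card ≤ 2)
    (hsem : ∀ σ : ℕ → Bool, (∀ S ∈ N, satClause σ S) →
      (σ e1.1 = e1.2 ∨ σ e2.1 = e2.2) ∨
      ((σ a1.1 = a1.2 ∨ σ a2.1 = a2.2) ∧ (σ c1.1 = c1.2 ∨ σ c2.1 = c2.2)))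
    (hdeg : ∀ l : Lit, (N.filter (fun S => l ∈ S)).card +
        ((F \ {C1, C2, C3}).filter (fun S => l ∈ S)).card ≤ 2) :
    False := by
  set D : CNF := {C1, C2, C3} with hD
  set G : CNF := (F \ D) ∪ N with hG
  have hDsub : D ⊆ F := by
    intro C hC
    simp only [hD, Finset.mem_insert, Finset.mem_singleton] at hC
    rcases hC with rfl | rfl | rfl <;> assumption
  have hDcard : D.card = 3 := by
    rw [hD, Finset.card_insert_of_notMem (by simp [h12, h13]),
        Finset.card_insert_of_notMem (by simp [h23]), Finset.card_singleton]
  -- G is a (3,2,2)-CNF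
  have hGK : KPQ 3 2 2 G := by
    constructor
    · intro C hC
      rcases Finset.mem_union.1 hC with h | h
      · exact hF.1 C (Finset.mem_sdiff.1 h).1
      · exact hNk C h
    · intro w
      have key : ∀ l : Lit, ldeg G l ≤ 2 := by
        intro l
        have : G.filter (fun S => l ∈ S) =
            (F \ D).filter (fun S => l ∈ S) ∪ N.filter (fun S => l ∈ S) := by
          rw [hG, Finset.filter_union]
        rw [ldeg, this]
        refine le_trans (Finset.card_union_le _ _) ?_
        have := hdeg l
        omega
      exact ⟨key (w, true), key (w, false)⟩
  -- G is unsatisfiable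
  have hGunsat : ¬ Satisfiable G := by
    rintro ⟨σ, hσ⟩
    have hbase : ∀ C ∈ F \ D, satClause σ C := fun C hC => hσ C (Finset.mem_union_left _ hC)
    have hNs : ∀ S ∈ N, satClause σ S := fun S hS => hσ S (Finset.mem_union_right _ hS)
    have hnoV : ∀ C ∈ F \ D, (v, true) ∉ C ∧ (v, false) ∉ C := by
      intro C hC
      rw [Finset.mem_sdiff] at hC
      constructor <;> intro hmem
      · exact hC.2 (by rw [← hocc]; exact Finset.mem_filter.2 ⟨hC.1, Or.inl hmem⟩)
      · exact hC.2 (by rw [← hocc]; exact Finset.mem_filter.2 ⟨hC.1, Or.inr hmem⟩)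
    rcases hsem σ hNs with hEF | ⟨hA, hB⟩
    · -- set x = (v,bb) true
      refine hunsat ⟨Function.update σ v bb, ?_⟩
      intro C hC
      by_cases hCD : C ∈ D
      · simp only [hD, Finset.mem_insert, Finset.mem_singleton] at hCD
        rcases hCD with rfl | rfl | rfl
        · exact ⟨(v, bb), hxC1, by simp [Function.update_self]⟩
        · exact ⟨(v, bb), hxC2, by simp [Function.update_self]⟩
        · rcases hEF with h | h
          · exact ⟨e1, he1, by rw [Function.update_of_ne hve1]; exact h⟩
          · exact ⟨e2, he2, by rw [Function.update_of_ne hve2]; exact h⟩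
      · have hC' : C ∈ F \ D := Finset.mem_sdiff.2 ⟨hC, hCD⟩
        exact sat_update (hnoV C hC').1 (hnoV C hC').2 (hbase C hC') bb
    · -- set x = (v,bb) false
      refine hunsat ⟨Function.update σ v (!bb), ?_⟩
      intro C hC
      by_cases hCD : C ∈ D
      · simp only [hD, Finset.mem_insert, Finset.mem_singleton] at hCD
        rcases hCD with rfl | rfl | rfl
        · rcases hA with h | h
          · exact ⟨a1, ha1, by rw [Function.update_of_ne hva1]; exact h⟩
          · exact ⟨a2, ha2, by rw [Function.update_of_ne hva2]; exact h⟩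
        · rcases hB with h | h
          · exact ⟨c1, hc1, by rw [Function.update_of_ne hvc1]; exact h⟩
          · exact ⟨c2, hc2, by rw [Function.update_of_ne hvc2]; exact h⟩
        · exact ⟨(v, !bb), hyC3, by simp [Function.update_self]⟩
      · have hC' : C ∈ F \ D := Finset.mem_sdiff.2 ⟨hC, hCD⟩
        exact sat_update (hnoV C hC').1 (hnoV C hC').2 (hbase C hC') (!bb)
  -- G is strictly smaller
  have hcard : G.card < F.card := by
    have h1 : G.card ≤ (F \ D).card + N.card := Finset.card_union_le _ _
    have h2 : (F \ D).card = F.card - D.card := Finset.card_sdiff_of_subset hDsub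
    have h3 : D.card ≤ F.card := Finset.card_le_card hDsub
    omega
  exact absurd (hmin G hGK hGunsat) (by omega)

-- small helpers for the case analysis
lemma sat3 {σ : ℕ → Bool} {p q r : Lit} (h : satClause σ {p, q, r}) :
    σ p.1 = p.2 ∨ σ q.1 = q.2 ∨ σ r.1 = r.2 := by
  obtain ⟨l, hl, hσ⟩ := h
  simp only [Finset.mem_insert, Finset.mem_singleton] at hl
  rcases hl with rfl | rfl | rfl <;> tauto

lemma of_neg {σ : ℕ → Bool} {l m : Lit} (h : m = Lit.neg l) (hm : ¬ (σ m.1 = m.2)) :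
    σ l.1 = l.2 := by
  subst h
  exact not_not.1 (fun hc => hm ((sat_neg_iff σ l).2 hc))

lemma cap3 {F : CNF} {l : Lit} {C1 C2 C3 : Clause} (h2 : ldeg F l ≤ 2)
    (h1F : C1 ∈ F) (h2F : C2 ∈ F) (h3F : C3 ∈ F)
    (h12 : C1 ≠ C2) (h13 : C1 ≠ C3) (h23 : C2 ≠ C3)
    (hl1 : l ∈ C1) (hl2 : l ∈ C2) (hl3 : l ∈ C3) : False := by
  have hsub : ({C1, C2, C3} : CNF) ⊆ F.filter (fun S => l ∈ S) := by
    intro S hS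
    simp only [Finset.mem_insert, Finset.mem_singleton] at hS
    rcases hS with rfl | rfl | rfl <;> exact Finset.mem_filter.2 ⟨by assumption, by assumption⟩
  have h3 : ({C1, C2, C3} : CNF).card = 3 := by
    rw [Finset.card_insert_of_notMem (by simp [h12, h13]),
        Finset.card_insert_of_notMem (by simp [h23]), Finset.card_singleton]
  have := Finset.card_le_card hsub
  simp only [ldeg] at h2
  omega

lemma base_fresh {F D : CNF} {l : Lit} (h0 : ldeg F l = 0) :
    ((F \ D).filter (fun S => l ∈ S)).card = 0 := by
  have := base_bound2 (F := F) D (l := l) (by omega)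
  have hsub : (F \ D).filter (fun S => l ∈ S) ⊆ F.filter (fun S => l ∈ S) :=
    Finset.filter_subset_filter _ Finset.sdiff_subset
  have := Finset.card_le_card hsub
  simp only [ldeg] at h0
  omega

-- extract the two non-v literals of a clause
lemma clause_split {C : Clause} {x : Lit} (hnt : Clause.nontaut C) (hcard : C.card = 3)
    (hx : x ∈ C) :
    ∃ p q : Lit, p ≠ q ∧ C = insert x {p, q} ∧ p ∈ C ∧ q ∈ C ∧
      p.1 ≠ x.1 ∧ q.1 ≠ x.1 ∧ Lit.neg p ≠ q := by
  have herase : (C.erase x).card = 2 := by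
    rw [Finset.card_erase_of_mem hx, hcard]
  obtain ⟨p, q, hpq, heq⟩ := Finset.card_eq_two.1 herase
  have hpC : p ∈ C := Finset.mem_of_mem_erase (heq ▸ Finset.mem_insert_self p {q})
  have hqC : q ∈ C := Finset.mem_of_mem_erase (heq ▸ Finset.mem_insert_of_mem (Finset.mem_singleton_self q))
  have hvar : ∀ r ∈ C.erase x, r.1 ≠ x.1 := by
    intro r hr hrv
    have hrx : r ≠ x := Finset.ne_of_mem_erase hr
    have hrC : r ∈ C := Finset.mem_of_mem_erase hr
    have : r = x ∨ r = Lit.neg x := by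
      obtain ⟨n, b⟩ := r; obtain ⟨m, c⟩ := x
      simp only [Lit.neg]
      simp only at hrv
      subst hrv
      rcases Bool.eq_or_eq_not b c with rfl | rfl
      · left; rfl
      · right; simp
    rcases this with rfl | rfl
    · exact hrx rfl
    · exact hnt x hx hrC
  refine ⟨p, q, hpq, ?_, hpC, hqC,
    hvar p (heq ▸ Finset.mem_insert_self p {q}),
    hvar q (heq ▸ Finset.mem_insert_of_mem (Finset.mem_singleton_self q)), ?_⟩
  · rw [← heq, Finset.insert_erase hx]
  · intro hc
    exact hnt p hpC (hc ▸ hqC)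

lemma deg3_aux (F : CNF) (hF : KPQ 3 2 2 F) (hunsat : ¬ Satisfiable F)
    (hmin : ∀ G : CNF, KPQ 3 2 2 G → ¬ Satisfiable G → F.card ≤ G.card)
    (v : ℕ) (bb : Bool)
    (hP : (F.filter (fun C => (v, bb) ∈ C)).card = 2)
    (hQ : (F.filter (fun C => (v, !bb) ∈ C)).card = 1) : False := by
  classical
  obtain ⟨C1, C2, h12, hPeq⟩ := Finset.card_eq_two.1 hP
  obtain ⟨C3, hQeq⟩ := Finset.card_eq_one.1 hQ
  have hC1P : C1 ∈ F.filter (fun C => (v, bb) ∈ C) := by rw [hPeq]; simp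
  have hC2P : C2 ∈ F.filter (fun C => (v, bb) ∈ C) := by rw [hPeq]; simp
  have hC3Q : C3 ∈ F.filter (fun C => (v, !bb) ∈ C) := by rw [hQeq]; simp
  have h1F := (Finset.mem_filter.1 hC1P).1
  have hxC1 := (Finset.mem_filter.1 hC1P).2
  have h2F := (Finset.mem_filter.1 hC2P).1
  have hxC2 := (Finset.mem_filter.1 hC2P).2
  have h3F := (Finset.mem_filter.1 hC3Q).1
  have hyC3 := (Finset.mem_filter.1 hC3Q).2
  have hdisj : ∀ C ∈ F, (v, bb) ∈ C → (v, !bb) ∈ C → False := by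
    intro C hCF hx hy
    exact (hF.1 C hCF).1 (v, bb) hx hy
  have h13 : C1 ≠ C3 := by rintro rfl; exact hdisj C1 h1F hxC1 hyC3
  have h23 : C2 ≠ C3 := by rintro rfl; exact hdisj C2 h2F hxC2 hyC3
  have hocc : occ F v = {C1, C2, C3} := by
    have hsplit : occ F v =
        F.filter (fun C => (v, bb) ∈ C) ∪ F.filter (fun C => (v, !bb) ∈ C) := by
      cases bb <;> simp only [occ, Bool.not_false, Bool.not_true] <;> rw [Finset.filter_or]
      exact Finset.union_comm _ _
    rw [hsplit, hPeq, hQeq]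
    ext S
    simp [Finset.mem_insert, or_assoc]
  obtain ⟨hnt1, hk1⟩ := hF.1 C1 h1F
  obtain ⟨hnt2, hk2⟩ := hF.1 C2 h2F
  obtain ⟨hnt3, hk3⟩ := hF.1 C3 h3F
  obtain ⟨a1, a2, hneA, hC1eq, ha1, ha2, hva1, hva2, hntA⟩ := clause_split hnt1 hk1 hxC1
  obtain ⟨c1, c2, hneC, hC2eq, hc1, hc2, hvc1, hvc2, hntC⟩ := clause_split hnt2 hk2 hxC2
  obtain ⟨e1, e2, hneE, hC3eq, he1, he2, hve1, hve2, hntE⟩ := clause_split hnt3 hk3 hyC3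
  have hld : ∀ l : Lit, ldeg F l ≤ 2 := ldeg_le2 hF
  -- cap facts
  have capE : ¬((e1 = a1 ∨ e1 = a2) ∧ (e1 = c1 ∨ e1 = c2)) := by
    rintro ⟨hA, hB⟩
    exact cap3 (hld e1) h1F h2F h3F h12 h13 h23
      (by rcases hA with rfl | rfl; exacts [ha1, ha2])
      (by rcases hB with rfl | rfl; exacts [hc1, hc2]) he1
  have capF : ¬((e2 = a1 ∨ e2 = a2) ∧ (e2 = c1 ∨ e2 = c2)) := by
    rintro ⟨hA, hB⟩
    exact cap3 (hld e2) h1F h2F h3F h12 h13 h23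
      (by rcases hA with rfl | rfl; exacts [ha1, ha2])
      (by rcases hB with rfl | rfl; exacts [hc1, hc2]) he2
  -- degree-bound helpers
  have hC1D : C1 ∈ ({C1, C2, C3} : CNF) := by simp
  have hC2D : C2 ∈ ({C1, C2, C3} : CNF) := by simp
  have hC3D : C3 ∈ ({C1, C2, C3} : CNF) := by simp
  have hb2 : ∀ l : Lit, ((F \ {C1, C2, C3}).filter (fun S => l ∈ S)).card ≤ 2 :=
    fun l => base_bound2 _ (hld l)
  have hb1 : ∀ (l : Lit) (Ci : Clause), Ci ∈ ({C1, C2, C3} : CNF) → Ci ∈ F → l ∈ Ci →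
      ((F \ {C1, C2, C3}).filter (fun S => l ∈ S)).card ≤ 1 :=
    fun l Ci hD hFm hl => base_bound1 (hld l) hFm hD hl
  have hb0 : ∀ (l : Lit) (Ci Cj : Clause), Ci ∈ ({C1, C2, C3} : CNF) → Ci ∈ F → l ∈ Ci →
      Cj ∈ ({C1, C2, C3} : CNF) → Cj ∈ F → l ∈ Cj → Ci ≠ Cj →
      ((F \ {C1, C2, C3}).filter (fun S => l ∈ S)).card = 0 :=
    fun l Ci Cj hiD hiF hli hjD hjF hlj hij =>
      base_bound0 (hld l) hiF hiD hli hjF hjD hlj hij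
  have WH := workhorse F hF hunsat hmin v bb C1 C2 C3 h1F h2F h3F h12 h13 h23 hocc
    a1 a2 c1 c2 e1 e2 hxC1 hxC2 hyC3 ha1 ha2 hc1 hc2 he1 he2 hva1 hva2 hvc1 hvc2 hve1 hve2
  -- fresh literal machinery
  set W : ℕ := (vars F).sup id + 1 with hW
  have hWF : W ∉ vars F := by
    intro h
    have := Finset.le_sup (f := id) h
    simp only [id] at this
    omega
  have hfreshv : ∀ (C : Clause), C ∈ F → ∀ l ∈ C, l.1 ≠ W := by
    intro C hC l hl h
    exact hWF (h ▸ var_mem_vars hC hl)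
  have hfreshld : ∀ t : Bool, ldeg F (W, t) = 0 := by
    intro t
    exact ldeg_fresh (by simpa using hWF)
  -- T1 : {e1,e2} = {a1,a2}
  by_cases hT1 : (e1 = a1 ∧ e2 = a2) ∨ (e1 = a2 ∧ e2 = a1)
  · have hA3 : a1 ∈ C3 ∧ a2 ∈ C3 := by
      rcases hT1 with ⟨h1, h2⟩ | ⟨h1, h2⟩
      · exact ⟨h1 ▸ he1, h2 ▸ he2⟩
      · exact ⟨h2 ▸ he2, h1 ▸ he1⟩
    have hwa1 : a1 ≠ (W, true) := fun h => hfreshv C1 h1F a1 ha1 (by rw [h])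
    have hwa2 : a2 ≠ (W, true) := fun h => hfreshv C1 h1F a2 ha2 (by rw [h])
    have hwa1' : a1 ≠ (W, false) := fun h => hfreshv C1 h1F a1 ha1 (by rw [h])
    have hwa2' : a2 ≠ (W, false) := fun h => hfreshv C1 h1F a2 ha2 (by rw [h])
    have hna1w : Lit.neg a1 ≠ (W, true) := fun h => hfreshv C1 h1F a1 ha1 (congrArg Prod.fst h)
    have hna2w : Lit.neg a2 ≠ (W, true) := fun h => hfreshv C1 h1F a2 ha2 (congrArg Prod.fst h)
    have hna1w' : Lit.neg a1 ≠ (W, false) := fun h => hfreshv C1 h1F a1 ha1 (congrArg Prod.fst h)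
    have hna2w' : Lit.neg a2 ≠ (W, false) := fun h => hfreshv C1 h1F a2 ha2 (congrArg Prod.fst h)
    refine WH {({a1, a2, (W, true)} : Clause), ({a1, a2, (W, false)} : Clause)} ?_ ?_ ?_ ?_
    · intro S hS
      rcases Finset.mem_insert.1 hS with rfl | hS
      · exact mk3 hneA hwa1 hwa2 hntA hna1w hna2w
      · rw [Finset.mem_singleton] at hS
        subst hS
        exact mk3 hneA hwa1' hwa2' hntA hna1w' hna2w'
    · exact le_trans (Finset.card_insert_le _ _) (by simp)
    · intro σ hS
      have hs1 := sat3 (hS _ (Finset.mem_insert_self _ _))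
      have hs2 := sat3 (hS _ (Finset.mem_insert_of_mem (Finset.mem_singleton_self _)))
      have hab : σ a1.1 = a1.2 ∨ σ a2.1 = a2.2 := by
        rcases hs1 with h | h | h
        · exact Or.inl h
        · exact Or.inr h
        · rcases hs2 with h' | h' | h'
          · exact Or.inl h'
          · exact Or.inr h'
          · simp only at h h'
            rw [h] at h'
            exact absurd h' (by simp)
      left
      rcases hT1 with ⟨h1, h2⟩ | ⟨h1, h2⟩
      · rw [h1, h2]; exact hab
      · rw [h1, h2]; exact hab.symm
    · intro l
      by_cases m1 : l ∈ ({a1, a2, (W, true)} : Clause) <;>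
        by_cases m2 : l ∈ ({a1, a2, (W, false)} : Clause)
      · have hbase : ((F \ {C1, C2, C3}).filter (fun S => l ∈ S)).card = 0 := by
          simp only [Finset.mem_insert, Finset.mem_singleton] at m1
          rcases m1 with h | h | h
          · exact hb0 l C1 C3 hC1D h1F (by rw [h]; exact ha1) hC3D h3F (by rw [h]; exact hA3.1) h13
          · exact hb0 l C1 C3 hC1D h1F (by rw [h]; exact ha2) hC3D h3F (by rw [h]; exact hA3.2) h13
          · simp only [Finset.mem_insert, Finset.mem_singleton] at m2
            rw [h] at m2
            rcases m2 with h' | h' | h'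
            · exact absurd h'.symm hwa1
            · exact absurd h'.symm hwa2
            · exact absurd h' (by simp)
        have hNle := Finset.card_filter_le
          ({({a1, a2, (W, true)} : Clause), ({a1, a2, (W, false)} : Clause)} : Finset Clause)
          (fun S => l ∈ S)
        have hNc2 : (({({a1, a2, (W, true)} : Clause), ({a1, a2, (W, false)} : Clause)} :
            Finset Clause)).card ≤ 2 := le_trans (Finset.card_insert_le _ _) (by simp)
        omega
      · have hNf : ((({({a1, a2, (W, true)} : Clause), ({a1, a2, (W, false)} : Clause)} :
            Finset Clause)).filter (fun S => l ∈ S)).card = 1 := by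
          rw [Finset.filter_insert, if_pos m1, Finset.filter_singleton, if_neg m2]
          simp
        have hbase : ((F \ {C1, C2, C3}).filter (fun S => l ∈ S)).card ≤ 1 := by
          simp only [Finset.mem_insert, Finset.mem_singleton] at m1
          rcases m1 with h | h | h
          · exact hb1 l C1 hC1D h1F (by rw [h]; exact ha1)
          · exact hb1 l C1 hC1D h1F (by rw [h]; exact ha2)
          · rw [h]
            have := base_fresh (F := F) (D := {C1, C2, C3}) (hfreshld true)
            omega
        omega
      · have hNf : ((({({a1, a2, (W, true)} : Clause), ({a1, a2, (W, false)} : Clause)} :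
            Finset Clause)).filter (fun S => l ∈ S)).card = 1 := by
          rw [Finset.filter_insert, if_neg m1, Finset.filter_singleton, if_pos m2]
          simp
        have hbase : ((F \ {C1, C2, C3}).filter (fun S => l ∈ S)).card ≤ 1 := by
          simp only [Finset.mem_insert, Finset.mem_singleton] at m2
          rcases m2 with h | h | h
          · exact hb1 l C1 hC1D h1F (by rw [h]; exact ha1)
          · exact hb1 l C1 hC1D h1F (by rw [h]; exact ha2)
          · rw [h]
            have := base_fresh (F := F) (D := {C1, C2, C3}) (hfreshld false)
            omega
        omega
      · have hNf : ((({({a1, a2, (W, true)} : Clause), ({a1, a2, (W, false)} : Clause)} :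
            Finset Clause)).filter (fun S => l ∈ S)).card = 0 := by
          rw [Finset.filter_insert, if_neg m1, Finset.filter_singleton, if_neg m2]
          simp
        have := hb2 l
        omega
  by_cases hT2 : (e1 = c1 ∧ e2 = c2) ∨ (e1 = c2 ∧ e2 = c1)
  · have hCm3 : c1 ∈ C3 ∧ c2 ∈ C3 := by
      rcases hT2 with ⟨h1, h2⟩ | ⟨h1, h2⟩
      · exact ⟨h1 ▸ he1, h2 ▸ he2⟩
      · exact ⟨h2 ▸ he2, h1 ▸ he1⟩
    have hwc1 : c1 ≠ (W, true) := fun h => hfreshv C2 h2F c1 hc1 (by rw [h])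
    have hwc2 : c2 ≠ (W, true) := fun h => hfreshv C2 h2F c2 hc2 (by rw [h])
    have hwc1' : c1 ≠ (W, false) := fun h => hfreshv C2 h2F c1 hc1 (by rw [h])
    have hwc2' : c2 ≠ (W, false) := fun h => hfreshv C2 h2F c2 hc2 (by rw [h])
    have hnc1w : Lit.neg c1 ≠ (W, true) := fun h => hfreshv C2 h2F c1 hc1 (congrArg Prod.fst h)
    have hnc2w : Lit.neg c2 ≠ (W, true) := fun h => hfreshv C2 h2F c2 hc2 (congrArg Prod.fst h)
    have hnc1w' : Lit.neg c1 ≠ (W, false) := fun h => hfreshv C2 h2F c1 hc1 (congrArg Prod.fst h)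
    have hnc2w' : Lit.neg c2 ≠ (W, false) := fun h => hfreshv C2 h2F c2 hc2 (congrArg Prod.fst h)
    refine WH {({c1, c2, (W, true)} : Clause), ({c1, c2, (W, false)} : Clause)} ?_ ?_ ?_ ?_
    · intro S hS
      rcases Finset.mem_insert.1 hS with rfl | hS
      · exact mk3 hneC hwc1 hwc2 hntC hnc1w hnc2w
      · rw [Finset.mem_singleton] at hS
        subst hS
        exact mk3 hneC hwc1' hwc2' hntC hnc1w' hnc2w'
    · exact le_trans (Finset.card_insert_le _ _) (by simp)
    · intro σ hS
      have hs1 := sat3 (hS _ (Finset.mem_insert_self _ _))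
      have hs2 := sat3 (hS _ (Finset.mem_insert_of_mem (Finset.mem_singleton_self _)))
      have hab : σ c1.1 = c1.2 ∨ σ c2.1 = c2.2 := by
        rcases hs1 with h | h | h
        · exact Or.inl h
        · exact Or.inr h
        · rcases hs2 with h' | h' | h'
          · exact Or.inl h'
          · exact Or.inr h'
          · simp only at h h'
            rw [h] at h'
            exact absurd h' (by simp)
      left
      rcases hT2 with ⟨h1, h2⟩ | ⟨h1, h2⟩
      · rw [h1, h2]; exact hab
      · rw [h1, h2]; exact hab.symm
    · intro l
      by_cases m1 : l ∈ ({c1, c2, (W, true)} : Clause) <;>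
        by_cases m2 : l ∈ ({c1, c2, (W, false)} : Clause)
      · have hbase : ((F \ {C1, C2, C3}).filter (fun S => l ∈ S)).card = 0 := by
          simp only [Finset.mem_insert, Finset.mem_singleton] at m1
          rcases m1 with h | h | h
          · exact hb0 l C2 C3 hC2D h2F (by rw [h]; exact hc1) hC3D h3F (by rw [h]; exact hCm3.1) h23
          · exact hb0 l C2 C3 hC2D h2F (by rw [h]; exact hc2) hC3D h3F (by rw [h]; exact hCm3.2) h23
          · simp only [Finset.mem_insert, Finset.mem_singleton] at m2
            rw [h] at m2
            rcases m2 with h' | h' | h'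
            · exact absurd h'.symm hwc1
            · exact absurd h'.symm hwc2
            · exact absurd h' (by simp)
        have hNle := Finset.card_filter_le
          ({({c1, c2, (W, true)} : Clause), ({c1, c2, (W, false)} : Clause)} : Finset Clause)
          (fun S => l ∈ S)
        have hNc2 : (({({c1, c2, (W, true)} : Clause), ({c1, c2, (W, false)} : Clause)} :
            Finset Clause)).card ≤ 2 := le_trans (Finset.card_insert_le _ _) (by simp)
        omega
      · have hNf : ((({({c1, c2, (W, true)} : Clause), ({c1, c2, (W, false)} : Clause)} :
            Finset Clause)).filter (fun S => l ∈ S)).card = 1 := by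
          rw [Finset.filter_insert, if_pos m1, Finset.filter_singleton, if_neg m2]
          simp
        have hbase : ((F \ {C1, C2, C3}).filter (fun S => l ∈ S)).card ≤ 1 := by
          simp only [Finset.mem_insert, Finset.mem_singleton] at m1
          rcases m1 with h | h | h
          · exact hb1 l C2 hC2D h2F (by rw [h]; exact hc1)
          · exact hb1 l C2 hC2D h2F (by rw [h]; exact hc2)
          · rw [h]
            have := base_fresh (F := F) (D := {C1, C2, C3}) (hfreshld true)
            omega
        omega
      · have hNf : ((({({c1, c2, (W, true)} : Clause), ({c1, c2, (W, false)} : Clause)} :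
            Finset Clause)).filter (fun S => l ∈ S)).card = 1 := by
          rw [Finset.filter_insert, if_neg m1, Finset.filter_singleton, if_pos m2]
          simp
        have hbase : ((F \ {C1, C2, C3}).filter (fun S => l ∈ S)).card ≤ 1 := by
          simp only [Finset.mem_insert, Finset.mem_singleton] at m2
          rcases m2 with h | h | h
          · exact hb1 l C2 hC2D h2F (by rw [h]; exact hc1)
          · exact hb1 l C2 hC2D h2F (by rw [h]; exact hc2)
          · rw [h]
            have := base_fresh (F := F) (D := {C1, C2, C3}) (hfreshld false)
            omega
        omega
      · have hNf : ((({({c1, c2, (W, true)} : Clause), ({c1, c2, (W, false)} : Clause)} :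
            Finset Clause)).filter (fun S => l ∈ S)).card = 0 := by
          rw [Finset.filter_insert, if_neg m1, Finset.filter_singleton, if_neg m2]
          simp
        have := hb2 l
        omega
  -- free/cert analysis
  by_cases hAfree : e1 = Lit.neg a1 ∨ e1 = Lit.neg a2 ∨ e2 = Lit.neg a1 ∨ e2 = Lit.neg a2
  · by_cases hBfree : e1 = Lit.neg c1 ∨ e1 = Lit.neg c2 ∨ e2 = Lit.neg c1 ∨ e2 = Lit.neg c2
    · -- N = ∅
      refine WH ∅ (by simp) (by simp) ?_ ?_
      · intro σ _
        by_cases he : σ e1.1 = e1.2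
        · exact Or.inl (Or.inl he)
        by_cases hf : σ e2.1 = e2.2
        · exact Or.inl (Or.inr hf)
        right
        constructor
        · rcases hAfree with h | h | h | h
          exacts [Or.inl (of_neg h he), Or.inr (of_neg h he), Or.inl (of_neg h hf),
            Or.inr (of_neg h hf)]
        · rcases hBfree with h | h | h | h
          exacts [Or.inl (of_neg h he), Or.inr (of_neg h he), Or.inl (of_neg h hf),
            Or.inr (of_neg h hf)]
      · intro l
        have := hb2 l
        simp only [Finset.filter_empty, Finset.card_empty]
        omega
    · -- B-side certificate needed, A side free
      by_cases hEiB : e1 = c1 ∨ e1 = c2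
      · -- use {c1,c2,e2}
        have hFiB : ¬(e2 = c1 ∨ e2 = c2) := by
          rintro (h | h) <;> rcases hEiB with h' | h'
          · exact hneE (h'.trans h.symm)
          · exact hT2 (Or.inr ⟨h', h⟩)
          · exact hT2 (Or.inl ⟨h', h⟩)
          · exact hneE (h'.trans h.symm)
        have v1 : c1 ≠ e2 := fun h => hFiB (Or.inl h.symm)
        have v2 : c2 ≠ e2 := fun h => hFiB (Or.inr h.symm)
        have n1 : Lit.neg c1 ≠ e2 := by
          intro h; exact hBfree (Or.inr (Or.inr (Or.inl h.symm)))
        have n2 : Lit.neg c2 ≠ e2 := by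
          intro h; exact hBfree (Or.inr (Or.inr (Or.inr h.symm)))
        refine WH {({c1, c2, e2} : Clause)} ?_ (by simp) ?_ ?_
        · intro S hS
          rw [Finset.mem_singleton] at hS
          subst hS
          exact mk3 hneC v1 v2 hntC n1 n2
        · intro σ hS
          have hs := sat3 (hS _ (Finset.mem_singleton_self _))
          by_cases he : σ e1.1 = e1.2
          · exact Or.inl (Or.inl he)
          by_cases hf : σ e2.1 = e2.2
          · exact Or.inl (Or.inr hf)
          right
          refine ⟨?_, ?_⟩
          · rcases hAfree with h | h | h | h
            exacts [Or.inl (of_neg h he), Or.inr (of_neg h he), Or.inl (of_neg h hf),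
              Or.inr (of_neg h hf)]
          · rcases hs with h | h | h
            · exact Or.inl h
            · exact Or.inr h
            · exact absurd h hf
        · intro l
          by_cases m : l ∈ ({c1, c2, e2} : Clause)
          · have hNf : ((({({c1, c2, e2} : Clause)}) : Finset Clause).filter
                (fun S => l ∈ S)).card = 1 := by
              rw [Finset.filter_singleton, if_pos m]; simp
            have hbase : ((F \ {C1, C2, C3}).filter (fun S => l ∈ S)).card ≤ 1 := by
              simp only [Finset.mem_insert, Finset.mem_singleton] at m
              rcases m with h | h | h
              · exact hb1 l C2 hC2D h2F (by rw [h]; exact hc1)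
              · exact hb1 l C2 hC2D h2F (by rw [h]; exact hc2)
              · exact hb1 l C3 hC3D h3F (by rw [h]; exact he2)
            omega
          · have hNf : ((({({c1, c2, e2} : Clause)}) : Finset Clause).filter
                (fun S => l ∈ S)).card = 0 := by
              rw [Finset.filter_singleton, if_neg m]; simp
            have := hb2 l
            omega
      · -- use {c1,c2,e1}
        have v1 : c1 ≠ e1 := fun h => hEiB (Or.inl h.symm)
        have v2 : c2 ≠ e1 := fun h => hEiB (Or.inr h.symm)
        have n1 : Lit.neg c1 ≠ e1 := by
          intro h; exact hBfree (Or.inl h.symm)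
        have n2 : Lit.neg c2 ≠ e1 := by
          intro h; exact hBfree (Or.inr (Or.inl h.symm))
        refine WH {({c1, c2, e1} : Clause)} ?_ (by simp) ?_ ?_
        · intro S hS
          rw [Finset.mem_singleton] at hS
          subst hS
          exact mk3 hneC v1 v2 hntC n1 n2
        · intro σ hS
          have hs := sat3 (hS _ (Finset.mem_singleton_self _))
          by_cases he : σ e1.1 = e1.2
          · exact Or.inl (Or.inl he)
          by_cases hf : σ e2.1 = e2.2
          · exact Or.inl (Or.inr hf)
          right
          refine ⟨?_, ?_⟩
          · rcases hAfree with h | h | h | h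
            exacts [Or.inl (of_neg h he), Or.inr (of_neg h he), Or.inl (of_neg h hf),
              Or.inr (of_neg h hf)]
          · rcases hs with h | h | h
            · exact Or.inl h
            · exact Or.inr h
            · exact absurd h he
        · intro l
          by_cases m : l ∈ ({c1, c2, e1} : Clause)
          · have hNf : ((({({c1, c2, e1} : Clause)}) : Finset Clause).filter
                (fun S => l ∈ S)).card = 1 := by
              rw [Finset.filter_singleton, if_pos m]; simp
            have hbase : ((F \ {C1, C2, C3}).filter (fun S => l ∈ S)).card ≤ 1 := by
              simp only [Finset.mem_insert, Finset.mem_singleton] at m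
              rcases m with h | h | h
              · exact hb1 l C2 hC2D h2F (by rw [h]; exact hc1)
              · exact hb1 l C2 hC2D h2F (by rw [h]; exact hc2)
              · exact hb1 l C3 hC3D h3F (by rw [h]; exact he1)
            omega
          · have hNf : ((({({c1, c2, e1} : Clause)}) : Finset Clause).filter
                (fun S => l ∈ S)).card = 0 := by
              rw [Finset.filter_singleton, if_neg m]; simp
            have := hb2 l
            omega
  · by_cases hBfree : e1 = Lit.neg c1 ∨ e1 = Lit.neg c2 ∨ e2 = Lit.neg c1 ∨ e2 = Lit.neg c2
    · -- A-side certificate needed, B side free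
      by_cases hEiA : e1 = a1 ∨ e1 = a2
      · have hFiA : ¬(e2 = a1 ∨ e2 = a2) := by
          rintro (h | h) <;> rcases hEiA with h' | h'
          · exact hneE (h'.trans h.symm)
          · exact hT1 (Or.inr ⟨h', h⟩)
          · exact hT1 (Or.inl ⟨h', h⟩)
          · exact hneE (h'.trans h.symm)
        have v1 : a1 ≠ e2 := fun h => hFiA (Or.inl h.symm)
        have v2 : a2 ≠ e2 := fun h => hFiA (Or.inr h.symm)
        have n1 : Lit.neg a1 ≠ e2 := by
          intro h; exact hAfree (Or.inr (Or.inr (Or.inl h.symm)))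
        have n2 : Lit.neg a2 ≠ e2 := by
          intro h; exact hAfree (Or.inr (Or.inr (Or.inr h.symm)))
        refine WH {({a1, a2, e2} : Clause)} ?_ (by simp) ?_ ?_
        · intro S hS
          rw [Finset.mem_singleton] at hS
          subst hS
          exact mk3 hneA v1 v2 hntA n1 n2
        · intro σ hS
          have hs := sat3 (hS _ (Finset.mem_singleton_self _))
          by_cases he : σ e1.1 = e1.2
          · exact Or.inl (Or.inl he)
          by_cases hf : σ e2.1 = e2.2
          · exact Or.inl (Or.inr hf)
          right
          refine ⟨?_, ?_⟩
          · rcases hs with h | h | h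
            · exact Or.inl h
            · exact Or.inr h
            · exact absurd h hf
          · rcases hBfree with h | h | h | h
            exacts [Or.inl (of_neg h he), Or.inr (of_neg h he), Or.inl (of_neg h hf),
              Or.inr (of_neg h hf)]
        · intro l
          by_cases m : l ∈ ({a1, a2, e2} : Clause)
          · have hNf : ((({({a1, a2, e2} : Clause)}) : Finset Clause).filter
                (fun S => l ∈ S)).card = 1 := by
              rw [Finset.filter_singleton, if_pos m]; simp
            have hbase : ((F \ {C1, C2, C3}).filter (fun S => l ∈ S)).card ≤ 1 := by
              simp only [Finset.mem_insert, Finset.mem_singleton] at m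
              rcases m with h | h | h
              · exact hb1 l C1 hC1D h1F (by rw [h]; exact ha1)
              · exact hb1 l C1 hC1D h1F (by rw [h]; exact ha2)
              · exact hb1 l C3 hC3D h3F (by rw [h]; exact he2)
            omega
          · have hNf : ((({({a1, a2, e2} : Clause)}) : Finset Clause).filter
                (fun S => l ∈ S)).card = 0 := by
              rw [Finset.filter_singleton, if_neg m]; simp
            have := hb2 l
            omega
      · have v1 : a1 ≠ e1 := fun h => hEiA (Or.inl h.symm)
        have v2 : a2 ≠ e1 := fun h => hEiA (Or.inr h.symm)
        have n1 : Lit.neg a1 ≠ e1 := by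
          intro h; exact hAfree (Or.inl h.symm)
        have n2 : Lit.neg a2 ≠ e1 := by
          intro h; exact hAfree (Or.inr (Or.inl h.symm))
        refine WH {({a1, a2, e1} : Clause)} ?_ (by simp) ?_ ?_
        · intro S hS
          rw [Finset.mem_singleton] at hS
          subst hS
          exact mk3 hneA v1 v2 hntA n1 n2
        · intro σ hS
          have hs := sat3 (hS _ (Finset.mem_singleton_self _))
          by_cases he : σ e1.1 = e1.2
          · exact Or.inl (Or.inl he)
          by_cases hf : σ e2.1 = e2.2
          · exact Or.inl (Or.inr hf)
          right
          refine ⟨?_, ?_⟩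
          · rcases hs with h | h | h
            · exact Or.inl h
            · exact Or.inr h
            · exact absurd h he
          · rcases hBfree with h | h | h | h
            exacts [Or.inl (of_neg h he), Or.inr (of_neg h he), Or.inl (of_neg h hf),
              Or.inr (of_neg h hf)]
        · intro l
          by_cases m : l ∈ ({a1, a2, e1} : Clause)
          · have hNf : ((({({a1, a2, e1} : Clause)}) : Finset Clause).filter
                (fun S => l ∈ S)).card = 1 := by
              rw [Finset.filter_singleton, if_pos m]; simp
            have hbase : ((F \ {C1, C2, C3}).filter (fun S => l ∈ S)).card ≤ 1 := by
              simp only [Finset.mem_insert, Finset.mem_singleton] at m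
              rcases m with h | h | h
              · exact hb1 l C1 hC1D h1F (by rw [h]; exact ha1)
              · exact hb1 l C1 hC1D h1F (by rw [h]; exact ha2)
              · exact hb1 l C3 hC3D h3F (by rw [h]; exact he1)
            omega
          · have hNf : ((({({a1, a2, e1} : Clause)}) : Finset Clause).filter
                (fun S => l ∈ S)).card = 0 := by
              rw [Finset.filter_singleton, if_neg m]; simp
            have := hb2 l
            omega
    · -- both sides need certificates
      by_cases hP12 : (e1 = a1 ∨ e1 = a2) ∨ (e2 = c1 ∨ e2 = c2)
      · -- N = {{a1,a2,e2},{c1,c2,e1}}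
        have hE2A : ¬(e2 = a1 ∨ e2 = a2) := by
          rcases hP12 with hEiA | hFiB
          · rintro (h | h) <;> rcases hEiA with h' | h'
            · exact hneE (h'.trans h.symm)
            · exact hT1 (Or.inr ⟨h', h⟩)
            · exact hT1 (Or.inl ⟨h', h⟩)
            · exact hneE (h'.trans h.symm)
          · exact fun h => capF ⟨h, hFiB⟩
        have hE1B : ¬(e1 = c1 ∨ e1 = c2) := by
          rcases hP12 with hEiA | hFiB
          · exact fun h => capE ⟨hEiA, h⟩
          · rintro (h | h) <;> rcases hFiB with h' | h'
            · exact hneE (h.trans h'.symm)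
            · exact hT2 (Or.inl ⟨h, h'⟩)
            · exact hT2 (Or.inr ⟨h, h'⟩)
            · exact hneE (h.trans h'.symm)
        have v1 : a1 ≠ e2 := fun h => hE2A (Or.inl h.symm)
        have v2 : a2 ≠ e2 := fun h => hE2A (Or.inr h.symm)
        have n1 : Lit.neg a1 ≠ e2 := fun h => hAfree (Or.inr (Or.inr (Or.inl h.symm)))
        have n2 : Lit.neg a2 ≠ e2 := fun h => hAfree (Or.inr (Or.inr (Or.inr h.symm)))
        have w1 : c1 ≠ e1 := fun h => hE1B (Or.inl h.symm)
        have w2 : c2 ≠ e1 := fun h => hE1B (Or.inr h.symm)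
        have m1 : Lit.neg c1 ≠ e1 := fun h => hBfree (Or.inl h.symm)
        have m2 : Lit.neg c2 ≠ e1 := fun h => hBfree (Or.inr (Or.inl h.symm))
        refine WH {({a1, a2, e2} : Clause), ({c1, c2, e1} : Clause)} ?_
          (le_trans (Finset.card_insert_le _ _) (by simp)) ?_ ?_
        · intro S hS
          rcases Finset.mem_insert.1 hS with rfl | hS
          · exact mk3 hneA v1 v2 hntA n1 n2
          · rw [Finset.mem_singleton] at hS
            subst hS
            exact mk3 hneC w1 w2 hntC m1 m2
        · intro σ hS
          have hs1 := sat3 (hS _ (Finset.mem_insert_self _ _))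
          have hs2 := sat3 (hS _ (Finset.mem_insert_of_mem (Finset.mem_singleton_self _)))
          by_cases he : σ e1.1 = e1.2
          · exact Or.inl (Or.inl he)
          by_cases hf : σ e2.1 = e2.2
          · exact Or.inl (Or.inr hf)
          right
          refine ⟨?_, ?_⟩
          · rcases hs1 with h | h | h
            · exact Or.inl h
            · exact Or.inr h
            · exact absurd h hf
          · rcases hs2 with h | h | h
            · exact Or.inl h
            · exact Or.inr h
            · exact absurd h he
        · intro l
          by_cases q1 : l ∈ ({a1, a2, e2} : Clause) <;>
            by_cases q2 : l ∈ ({c1, c2, e1} : Clause)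
          · have hbase : ((F \ {C1, C2, C3}).filter (fun S => l ∈ S)).card = 0 := by
              simp only [Finset.mem_insert, Finset.mem_singleton] at q1 q2
              rcases q1 with h | h | h <;> rcases q2 with h' | h' | h'
              · exact hb0 l C1 C2 hC1D h1F (by rw [h]; exact ha1) hC2D h2F
                  (by rw [h']; exact hc1) h12
              · exact hb0 l C1 C2 hC1D h1F (by rw [h]; exact ha1) hC2D h2F
                  (by rw [h']; exact hc2) h12
              · exact hb0 l C1 C3 hC1D h1F (by rw [h]; exact ha1) hC3D h3F
                  (by rw [h']; exact he1) h13
              · exact hb0 l C1 C2 hC1D h1F (by rw [h]; exact ha2) hC2D h2F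
                  (by rw [h']; exact hc1) h12
              · exact hb0 l C1 C2 hC1D h1F (by rw [h]; exact ha2) hC2D h2F
                  (by rw [h']; exact hc2) h12
              · exact hb0 l C1 C3 hC1D h1F (by rw [h]; exact ha2) hC3D h3F
                  (by rw [h']; exact he1) h13
              · exact hb0 l C2 C3 hC2D h2F (by rw [h']; exact hc1) hC3D h3F
                  (by rw [h]; exact he2) h23
              · exact hb0 l C2 C3 hC2D h2F (by rw [h']; exact hc2) hC3D h3F
                  (by rw [h]; exact he2) h23
              · exact absurd (h'.symm.trans h) hneE
            have hNle := Finset.card_filter_le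
              ({({a1, a2, e2} : Clause), ({c1, c2, e1} : Clause)} : Finset Clause)
              (fun S => l ∈ S)
            have hNc2 : (({({a1, a2, e2} : Clause), ({c1, c2, e1} : Clause)} :
                Finset Clause)).card ≤ 2 := le_trans (Finset.card_insert_le _ _) (by simp)
            omega
          · have hNf : ((({({a1, a2, e2} : Clause), ({c1, c2, e1} : Clause)} :
                Finset Clause)).filter (fun S => l ∈ S)).card = 1 := by
              rw [Finset.filter_insert, if_pos q1, Finset.filter_singleton, if_neg q2]
              simp
            have hbase : ((F \ {C1, C2, C3}).filter (fun S => l ∈ S)).card ≤ 1 := by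
              simp only [Finset.mem_insert, Finset.mem_singleton] at q1
              rcases q1 with h | h | h
              · exact hb1 l C1 hC1D h1F (by rw [h]; exact ha1)
              · exact hb1 l C1 hC1D h1F (by rw [h]; exact ha2)
              · exact hb1 l C3 hC3D h3F (by rw [h]; exact he2)
            omega
          · have hNf : ((({({a1, a2, e2} : Clause), ({c1, c2, e1} : Clause)} :
                Finset Clause)).filter (fun S => l ∈ S)).card = 1 := by
              rw [Finset.filter_insert, if_neg q1, Finset.filter_singleton, if_pos q2]
              simp
            have hbase : ((F \ {C1, C2, C3}).filter (fun S => l ∈ S)).card ≤ 1 := by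
              simp only [Finset.mem_insert, Finset.mem_singleton] at q2
              rcases q2 with h | h | h
              · exact hb1 l C2 hC2D h2F (by rw [h]; exact hc1)
              · exact hb1 l C2 hC2D h2F (by rw [h]; exact hc2)
              · exact hb1 l C3 hC3D h3F (by rw [h]; exact he1)
            omega
          · have hNf : ((({({a1, a2, e2} : Clause), ({c1, c2, e1} : Clause)} :
                Finset Clause)).filter (fun S => l ∈ S)).card = 0 := by
              rw [Finset.filter_insert, if_neg q1, Finset.filter_singleton, if_neg q2]
              simp
            have := hb2 l
            omega
      · -- N = {{a1,a2,e1},{c1,c2,e2}}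
        push_neg at hP12
        obtain ⟨hE1A, hE2B⟩ := hP12
        have v1 : a1 ≠ e1 := fun h => hE1A.1 h.symm
        have v2 : a2 ≠ e1 := fun h => hE1A.2 h.symm
        have n1 : Lit.neg a1 ≠ e1 := fun h => hAfree (Or.inl h.symm)
        have n2 : Lit.neg a2 ≠ e1 := fun h => hAfree (Or.inr (Or.inl h.symm))
        have w1 : c1 ≠ e2 := fun h => hE2B.1 h.symm
        have w2 : c2 ≠ e2 := fun h => hE2B.2 h.symm
        have m1 : Lit.neg c1 ≠ e2 := fun h => hBfree (Or.inr (Or.inr (Or.inl h.symm)))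
        have m2 : Lit.neg c2 ≠ e2 := fun h => hBfree (Or.inr (Or.inr (Or.inr h.symm)))
        refine WH {({a1, a2, e1} : Clause), ({c1, c2, e2} : Clause)} ?_
          (le_trans (Finset.card_insert_le _ _) (by simp)) ?_ ?_
        · intro S hS
          rcases Finset.mem_insert.1 hS with rfl | hS
          · exact mk3 hneA v1 v2 hntA n1 n2
          · rw [Finset.mem_singleton] at hS
            subst hS
            exact mk3 hneC w1 w2 hntC m1 m2
        · intro σ hS
          have hs1 := sat3 (hS _ (Finset.mem_insert_self _ _))
          have hs2 := sat3 (hS _ (Finset.mem_insert_of_mem (Finset.mem_singleton_self _)))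
          by_cases he : σ e1.1 = e1.2
          · exact Or.inl (Or.inl he)
          by_cases hf : σ e2.1 = e2.2
          · exact Or.inl (Or.inr hf)
          right
          refine ⟨?_, ?_⟩
          · rcases hs1 with h | h | h
            · exact Or.inl h
            · exact Or.inr h
            · exact absurd h he
          · rcases hs2 with h | h | h
            · exact Or.inl h
            · exact Or.inr h
            · exact absurd h hf
        · intro l
          by_cases q1 : l ∈ ({a1, a2, e1} : Clause) <;>
            by_cases q2 : l ∈ ({c1, c2, e2} : Clause)
          · have hbase : ((F \ {C1, C2, C3}).filter (fun S => l ∈ S)).card = 0 := by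
              simp only [Finset.mem_insert, Finset.mem_singleton] at q1 q2
              rcases q1 with h | h | h <;> rcases q2 with h' | h' | h'
              · exact hb0 l C1 C2 hC1D h1F (by rw [h]; exact ha1) hC2D h2F
                  (by rw [h']; exact hc1) h12
              · exact hb0 l C1 C2 hC1D h1F (by rw [h]; exact ha1) hC2D h2F
                  (by rw [h']; exact hc2) h12
              · exact hb0 l C1 C3 hC1D h1F (by rw [h]; exact ha1) hC3D h3F
                  (by rw [h']; exact he2) h13
              · exact hb0 l C1 C2 hC1D h1F (by rw [h]; exact ha2) hC2D h2F
                  (by rw [h']; exact hc1) h12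
              · exact hb0 l C1 C2 hC1D h1F (by rw [h]; exact ha2) hC2D h2F
                  (by rw [h']; exact hc2) h12
              · exact hb0 l C1 C3 hC1D h1F (by rw [h]; exact ha2) hC3D h3F
                  (by rw [h']; exact he2) h13
              · exact hb0 l C2 C3 hC2D h2F (by rw [h']; exact hc1) hC3D h3F
                  (by rw [h]; exact he1) h23
              · exact hb0 l C2 C3 hC2D h2F (by rw [h']; exact hc2) hC3D h3F
                  (by rw [h]; exact he1) h23
              · exact absurd (h.symm.trans h') hneE
            have hNle := Finset.card_filter_le
              ({({a1, a2, e1} : Clause), ({c1, c2, e2} : Clause)} : Finset Clause)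
              (fun S => l ∈ S)
            have hNc2 : (({({a1, a2, e1} : Clause), ({c1, c2, e2} : Clause)} :
                Finset Clause)).card ≤ 2 := le_trans (Finset.card_insert_le _ _) (by simp)
            omega
          · have hNf : ((({({a1, a2, e1} : Clause), ({c1, c2, e2} : Clause)} :
                Finset Clause)).filter (fun S => l ∈ S)).card = 1 := by
              rw [Finset.filter_insert, if_pos q1, Finset.filter_singleton, if_neg q2]
              simp
            have hbase : ((F \ {C1, C2, C3}).filter (fun S => l ∈ S)).card ≤ 1 := by
              simp only [Finset.mem_insert, Finset.mem_singleton] at q1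
              rcases q1 with h | h | h
              · exact hb1 l C1 hC1D h1F (by rw [h]; exact ha1)
              · exact hb1 l C1 hC1D h1F (by rw [h]; exact ha2)
              · exact hb1 l C3 hC3D h3F (by rw [h]; exact he1)
            omega
          · have hNf : ((({({a1, a2, e1} : Clause), ({c1, c2, e2} : Clause)} :
                Finset Clause)).filter (fun S => l ∈ S)).card = 1 := by
              rw [Finset.filter_insert, if_neg q1, Finset.filter_singleton, if_pos q2]
              simp
            have hbase : ((F \ {C1, C2, C3}).filter (fun S => l ∈ S)).card ≤ 1 := by
              simp only [Finset.mem_insert, Finset.mem_singleton] at q2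
              rcases q2 with h | h | h
              · exact hb1 l C2 hC2D h2F (by rw [h]; exact hc1)
              · exact hb1 l C2 hC2D h2F (by rw [h]; exact hc2)
              · exact hb1 l C3 hC3D h3F (by rw [h]; exact he2)
            omega
          · have hNf : ((({({a1, a2, e1} : Clause), ({c1, c2, e2} : Clause)} :
                Finset Clause)).filter (fun S => l ∈ S)).card = 0 := by
              rw [Finset.filter_insert, if_neg q1, Finset.filter_singleton, if_neg q2]
              simp
            have := hb2 l
            omega


lemma deg1_aux (F : CNF) (hF : KPQ 3 2 2 F) (hunsat : ¬ Satisfiable F)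
    (hmin : ∀ G : CNF, KPQ 3 2 2 G → ¬ Satisfiable G → F.card ≤ G.card)
    (v : ℕ) (h1 : vdeg F v = 1) : False := by
  obtain ⟨C, hocc_eq⟩ := Finset.card_eq_one.1 h1
  have hCocc : C ∈ occ F v := by rw [hocc_eq]; simp
  have hCF : C ∈ F := (Finset.mem_filter.1 hCocc).1
  have hcond := (Finset.mem_filter.1 hCocc).2
  obtain ⟨bb, hb⟩ : ∃ bb, (v, bb) ∈ C := by
    rcases hcond with h | h
    · exact ⟨true, h⟩
    · exact ⟨false, h⟩
  have hsub : F.erase C ⊆ F := Finset.erase_subset _ _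
  have hKPQ := KPQ_mono hF hsub
  have hlt : (F.erase C).card < F.card := Finset.card_erase_lt_of_mem hCF
  have hsat : Satisfiable (F.erase C) := by
    by_contra h
    exact absurd (hmin _ hKPQ h) (by omega)
  obtain ⟨σ, hσ⟩ := hsat
  apply hunsat
  refine ⟨Function.update σ v bb, ?_⟩
  intro C' hC'
  by_cases hCC : C' = C
  · subst hCC
    exact ⟨(v, bb), hb, by simp⟩
  · have hC'e : C' ∈ F.erase C := Finset.mem_erase.2 ⟨hCC, hC'⟩
    have hnotocc : C' ∉ occ F v := by rw [hocc_eq]; simpa using hCC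
    have hno : ¬((v, true) ∈ C' ∨ (v, false) ∈ C') := by
      intro h
      exact hnotocc (Finset.mem_filter.2 ⟨hC', h⟩)
    push_neg at hno
    exact sat_update hno.1 hno.2 (hσ C' hC'e) bb

lemma handshake (F : CNF) (hK : isKCNF 3 F) :
    ∑ v ∈ vars F, vdeg F v = 3 * F.card := by
  have hcard_im : ∀ C ∈ F, (C.image Prod.fst).card = 3 := by
    intro C hC
    obtain ⟨hnt, h3⟩ := hK C hC
    rw [Finset.card_image_of_injOn, h3]
    intro l hl l' hl' hfst
    by_contra hne
    have hll : l' = Lit.neg l := by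
      obtain ⟨n, b⟩ := l; obtain ⟨n', b'⟩ := l'
      simp only at hfst
      subst hfst
      simp only [Lit.neg]
      cases b <;> cases b' <;> simp_all
    exact hnt l hl (hll ▸ hl')
  have step : ∀ C ∈ F, ((vars F).filter
      (fun v => (v, true) ∈ C ∨ (v, false) ∈ C)) = C.image Prod.fst := by
    intro C hC
    ext v
    simp only [Finset.mem_filter, Finset.mem_image]
    constructor
    · rintro ⟨-, h | h⟩
      · exact ⟨(v, true), h, rfl⟩
      · exact ⟨(v, false), h, rfl⟩
    · rintro ⟨l, hl, rfl⟩
      refine ⟨var_mem_vars hC hl, ?_⟩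
      cases hb : l.2
      · right; rw [← hb]; exact hl
      · left; rw [← hb]; exact hl
  calc ∑ v ∈ vars F, vdeg F v
      = ∑ v ∈ vars F, ∑ C ∈ F, (if (v, true) ∈ C ∨ (v, false) ∈ C then 1 else 0) := by
        refine Finset.sum_congr rfl fun v _ => ?_
        rw [vdeg, occ, Finset.card_filter]
    _ = ∑ C ∈ F, ∑ v ∈ vars F, (if (v, true) ∈ C ∨ (v, false) ∈ C then 1 else 0) :=
        Finset.sum_comm
    _ = ∑ C ∈ F, ((vars F).filter (fun v => (v, true) ∈ C ∨ (v, false) ∈ C)).card := by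
        refine Finset.sum_congr rfl fun C _ => ?_
        rw [Finset.card_filter]
    _ = ∑ C ∈ F, 3 := by
        refine Finset.sum_congr rfl fun C hC => ?_
        rw [step C hC, hcard_im C hC]
    _ = 3 * F.card := by
        rw [Finset.sum_const, smul_eq_mul, mul_comm]

theorem stmt17 (F : CNF) (hF : KPQ 3 2 2 F) (hunsat : ¬ Satisfiable F)
    (hmin : ∀ G : CNF, KPQ 3 2 2 G → ¬ Satisfiable G → F.card ≤ G.card) :
    (∀ v : ℕ, vdeg F v ≠ 3) ∧ Even F.card := by
  have hsplit : ∀ v : ℕ, occ F v =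
      F.filter (fun C => (v, true) ∈ C) ∪ F.filter (fun C => (v, false) ∈ C) := by
    intro v
    rw [occ, Finset.filter_or]
  have hdisj : ∀ v : ℕ, Disjoint (F.filter (fun C => (v, true) ∈ C))
      (F.filter (fun C => (v, false) ∈ C)) := by
    intro v
    refine Finset.disjoint_left.2 fun C hC1 hC2 => ?_
    exact (hF.1 C (Finset.mem_filter.1 hC1).1).1 (v, true)
      (Finset.mem_filter.1 hC1).2 (Finset.mem_filter.1 hC2).2
  have hvd : ∀ v : ℕ, vdeg F v = (F.filter (fun C => (v, true) ∈ C)).card +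
      (F.filter (fun C => (v, false) ∈ C)).card := by
    intro v
    rw [vdeg, hsplit v, Finset.card_union_of_disjoint (hdisj v)]
  have hdeg3 : ∀ v : ℕ, vdeg F v ≠ 3 := by
    intro v h3
    have hP := (hF.2 v).1
    have hQ := (hF.2 v).2
    simp only [ldeg] at hP hQ
    have hsum := (hvd v) ▸ h3
    rcases Nat.lt_or_ge (F.filter (fun C => (v, true) ∈ C)).card 2 with h | h
    · -- true-count is 1, false-count is 2
      refine deg3_aux F hF hunsat hmin v false ?_ ?_
      · simpa using by omega
      · simpa using by omega
    · refine deg3_aux F hF hunsat hmin v true ?_ ?_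
      · simpa using by omega
      · simpa using by omega
  refine ⟨hdeg3, ?_⟩
  have hdeg1 : ∀ v : ℕ, vdeg F v ≠ 1 := fun v h => deg1_aux F hF hunsat hmin v h
  have hle4 : ∀ v : ℕ, vdeg F v ≤ 4 := by
    intro v
    have hP := (hF.2 v).1
    have hQ := (hF.2 v).2
    simp only [ldeg] at hP hQ
    rw [hvd v]
    omega
  have heven : ∀ v ∈ vars F, Even (vdeg F v) := by
    intro v _
    rcases Nat.even_or_odd (vdeg F v) with h | h
    · exact h
    · obtain ⟨k, hk⟩ := h
      have h1 := hdeg1 v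
      have h3 := hdeg3 v
      have h4 := hle4 v
      omega
  have hsum : Even (∑ v ∈ vars F, vdeg F v) :=
    Finset.sum_induction _ Even (fun a b ha hb => ha.add hb) Even.zero heven
  rw [handshake F hF.1] at hsum
  rcases Nat.even_mul.1 hsum with h | h
  · exact absurd h (by decide)
  · exact h
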